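/- For any tree T on n ≥ 3 vertices and positive real p, 2^(1/p) ≤ A_p(T) ≤ (n−2)·(n−1)^(1/p), where the lower bound holds with equality iff T is the path P_n and the upper bound with equality iff T is the star K_{1,n−1}. -/

import Mathlib

set_option linter.unusedSectionVars false
set_option maxHeartbeats 1000000

open Finset

/-- The general Albertson irregularity index. -/
noncomputable def Ap {V : Type*} [Fintype V] (G : SimpleGraph V) [DecidableRel G.Adj]
    (p : ℝ) : ℝ :=
  ((∑ u : V, ∑ v ∈ G.neighborFinset u,
      |(G.degree u : ℝ) - (G.degree v : ℝ)| ^ p) / 2) ^ (1 / p)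

section Aux

open SimpleGraph

variable {V : Type*} [Fintype V] [DecidableEq V]
  (T : SimpleGraph V) [DecidableRel T.Adj]

/-- swap double neighbor sums -/
lemma nbr_sum_comm (g : V → V → ℝ) :
    ∑ u : V, ∑ v ∈ T.neighborFinset u, g u v = ∑ u : V, ∑ v ∈ T.neighborFinset u, g v u := by
  have h : ∀ (f : V → V → ℝ), ∑ u : V, ∑ v ∈ T.neighborFinset u, f u v
      = ∑ u : V, ∑ v : V, if T.Adj u v then f u v else 0 := by
    intro f
    refine Finset.sum_congr rfl fun u _ => ?_
    rw [neighborFinset_eq_filter, Finset.sum_filter]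
  rw [h, h, Finset.sum_comm]
  refine Finset.sum_congr rfl fun u _ => Finset.sum_congr rfl fun v _ => ?_
  simp only [adj_comm]

variable {T}

lemma degree_pos (hc : T.Connected) (hn : 2 ≤ Fintype.card V) (v : V) :
    1 ≤ T.degree v := by
  rw [show (1:ℕ) ≤ T.degree v ↔ 0 < T.degree v from Iff.rfl, T.degree_pos_iff_exists_adj]
  obtain ⟨w, hw⟩ := Fintype.exists_ne_of_one_lt_card (by omega) v
  obtain ⟨p⟩ := hc v w
  cases p with
  | nil => exact absurd rfl hw
  | cons h q => exact ⟨_, h⟩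

lemma sum_deg (hT : T.IsTree) : ∑ v, T.degree v = 2 * (Fintype.card V - 1) := by
  have h2 := hT.card_edgeFinset
  rw [T.sum_degrees_eq_twice_card_edges]
  omega

lemma leaf_count (hT : T.IsTree) (hn : 2 ≤ Fintype.card V) :
    2 ≤ (univ.filter (fun v => T.degree v = 1)).card := by
  classical
  set L := univ.filter (fun v => T.degree v = 1) with hL
  have hsplit : ∑ v ∈ L, T.degree v + ∑ v ∈ Lᶜ, T.degree v = 2 * (Fintype.card V - 1) := by
    rw [Finset.sum_add_sum_compl, sum_deg hT]
  have h1 : ∑ v ∈ L, T.degree v = L.card := by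
    rw [Finset.sum_congr rfl (fun v hv => (Finset.mem_filter.1 hv).2), Finset.sum_const,
      smul_eq_mul, mul_one]
  have h2 : 2 * Lᶜ.card ≤ ∑ v ∈ Lᶜ, T.degree v := by
    rw [show 2 * Lᶜ.card = ∑ _v ∈ Lᶜ, 2 by rw [Finset.sum_const, smul_eq_mul, mul_comm]]
    refine Finset.sum_le_sum fun v hv => ?_
    have hv1 := degree_pos hT.isConnected hn v
    have hv2 : ¬ T.degree v = 1 := by
      simpa [hL] using (Finset.mem_compl.1 hv)
    omega
  have hLc : Lᶜ.card = Fintype.card V - L.card := by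
    rw [Finset.card_compl]
  have hle : L.card ≤ Fintype.card V := Finset.card_le_card (Finset.subset_univ L) |>.trans
    (le_of_eq (Finset.card_univ))
  omega

lemma leaf_count3 (hT : T.IsTree) (hn : 3 ≤ Fintype.card V) (v0 : V) (h3 : 3 ≤ T.degree v0) :
    3 ≤ (univ.filter (fun v => T.degree v = 1)).card := by
  classical
  set L := univ.filter (fun v => T.degree v = 1) with hL
  have hsplit : ∑ v ∈ L, T.degree v + ∑ v ∈ Lᶜ, T.degree v = 2 * (Fintype.card V - 1) := by
    rw [Finset.sum_add_sum_compl, sum_deg hT]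
  have h1 : ∑ v ∈ L, T.degree v = L.card := by
    rw [Finset.sum_congr rfl (fun v hv => (Finset.mem_filter.1 hv).2), Finset.sum_const,
      smul_eq_mul, mul_one]
  have hv0 : v0 ∈ Lᶜ := by
    simp only [hL, Finset.mem_compl, Finset.mem_filter, Finset.mem_univ, true_and]
    omega
  have h2 : 2 * Lᶜ.card + 1 ≤ ∑ v ∈ Lᶜ, T.degree v := by
    have : ∑ _v ∈ Lᶜ, 2 < ∑ v ∈ Lᶜ, T.degree v := by
      refine Finset.sum_lt_sum (fun v hv => ?_) ⟨v0, hv0, by omega⟩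
      have hv1 := degree_pos hT.isConnected (by omega) v
      have hv2 : ¬ T.degree v = 1 := by
        simpa [hL] using (Finset.mem_compl.1 hv)
      omega
    rw [Finset.sum_const, smul_eq_mul, mul_comm] at this
    omega
  have hLc : Lᶜ.card = Fintype.card V - L.card := by
    rw [Finset.card_compl]
  have hle : L.card ≤ Fintype.card V := by
    simpa using Finset.card_le_card (Finset.subset_univ L)
  omega

lemma nbr_unique {u v w : V} (hu : T.degree u = 1) (hv : T.Adj u v) (hw : T.Adj u w) :
    v = w := by
  have := Finset.card_le_one.1 (le_of_eq hu)
  exact this v (by rwa [mem_neighborFinset]) w (by rwa [mem_neighborFinset])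

lemma leaf_nbr_deg (hc : T.Connected) (hn : 3 ≤ Fintype.card V) {u v : V}
    (h : T.Adj u v) (hu : T.degree u = 1) : 2 ≤ T.degree v := by
  by_contra hlt
  have hv1 := degree_pos hc (by omega) v
  have hv : T.degree v = 1 := by omega
  have key : ∀ (w : V) {x : V} (q : T.Walk x w), x = u ∨ x = v → w = u ∨ w = v := by
    intro w x q
    induction q with
    | nil => exact id
    | @cons a b c h' q ih =>
      rintro (rfl | rfl)
      · exact ih (Or.inr (nbr_unique hu h h').symm)
      · exact ih (Or.inl (nbr_unique hv (T.adj_symm h) h').symm)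
  obtain ⟨w, hw⟩ : ∃ w : V, w ≠ u ∧ w ≠ v := by
    by_contra hcon
    push_neg at hcon
    have hsub : (univ : Finset V) ⊆ {u, v} := by
      intro x _
      rcases eq_or_ne x u with rfl | hx
      · exact Finset.mem_insert_self _ _
      · simp [hcon x hx]
    have hc2 := Finset.card_le_card hsub
    have : ({u, v} : Finset V).card ≤ 2 := (Finset.card_insert_le _ _).trans (by simp)
    rw [Finset.card_univ] at hc2
    omega
  obtain ⟨q⟩ := hc u w
  rcases key w q (Or.inl rfl) with h' | h'
  · exact hw.1 h'
  · exact hw.2 h'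

lemma exists_parent (hc : T.Connected) {a v : V} (hv : v ≠ a) :
    ∃ w, T.Adj w v ∧ T.dist a w + 1 = T.dist a v := by
  obtain ⟨p, hp⟩ := hc.exists_walk_length_eq_dist v a
  cases p with
  | nil => exact absurd rfl hv
  | @cons _ b _ h q =>
    refine ⟨b, T.adj_symm h, ?_⟩
    rw [SimpleGraph.Walk.length_cons] at hp
    have hq : T.dist b a ≤ q.length := SimpleGraph.dist_le q
    have htri : T.dist v a ≤ T.dist v b + T.dist b a := hc.dist_triangle
    have hvb : T.dist v b = 1 := SimpleGraph.dist_eq_one_iff_adj.2 h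
    rw [T.dist_comm (u := a) (v := b), T.dist_comm (u := a) (v := v)]
    omega

lemma dist_inj (hT : T.IsTree) (hdeg : ∀ v, T.degree v ≤ 2) {a : V} (ha : T.degree a = 1) :
    Function.Injective (fun v => T.dist a v) := by
  have key : ∀ k u v, T.dist a u = k → T.dist a v = k → u = v := by
    intro k
    induction k using Nat.strong_induction_on with
    | _ k ih =>
      intro u v hu hv
      match k, ih with
      | 0, _ =>
        have h1 : u = a := by
          rcases SimpleGraph.dist_eq_zero_iff_eq_or_not_reachable.1 hu with h | h
          · exact h.symm
          · exact absurd (hT.isConnected a u) h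
        have h2 : v = a := by
          rcases SimpleGraph.dist_eq_zero_iff_eq_or_not_reachable.1 hv with h | h
          · exact h.symm
          · exact absurd (hT.isConnected a v) h
        rw [h1, h2]
      | k + 1, ih =>
        have hua : u ≠ a := by rintro rfl; simp [SimpleGraph.dist_self] at hu
        have hva : v ≠ a := by rintro rfl; simp [SimpleGraph.dist_self] at hv
        obtain ⟨wu, hwu, hwud⟩ := exists_parent hT.isConnected hua
        obtain ⟨wv, hwv, hwvd⟩ := exists_parent hT.isConnected hva
        have hww : wu = wv := ih k (by omega) wu wv (by omega) (by omega)
        subst hww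
        match k, ih, hu, hv, hwud with
        | 0, _, hu, hv, hwud =>
          have hwa : wu = a := by
            rcases SimpleGraph.dist_eq_zero_iff_eq_or_not_reachable.1 (by omega : T.dist a wu = 0)
              with h | h
            · exact h.symm
            · exact absurd (hT.isConnected a wu) h
          subst hwa
          exact nbr_unique ha hwu hwv
        | j + 1, ih, hu, hv, hwud =>
          have hwa : wu ≠ a := by
            rintro rfl; rw [SimpleGraph.dist_self] at hwud; omega
          obtain ⟨z, hz, hzd⟩ := exists_parent hT.isConnected hwa
          by_contra huv
          have hzu : z ≠ u := by rintro rfl; omega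
          have hzv : z ≠ v := by rintro rfl; omega
          have hsub : ({z, u, v} : Finset V) ⊆ T.neighborFinset wu := by
            intro x hx
            simp only [Finset.mem_insert, Finset.mem_singleton] at hx
            rcases hx with rfl | rfl | rfl
            · exact (T.mem_neighborFinset wu x).2 (T.adj_symm hz)
            · exact (T.mem_neighborFinset wu x).2 hwu
            · exact (T.mem_neighborFinset wu x).2 hwv
          have hcard : ({z, u, v} : Finset V).card = 3 := by
            rw [Finset.card_insert_of_notMem (by simp [hzu, hzv]),
              Finset.card_insert_of_notMem (by simp [huv]), Finset.card_singleton]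
          have := Finset.card_le_card hsub
          rw [hcard] at this
          have := hdeg wu
          rw [SimpleGraph.degree] at this
          omega
  intro u v h
  exact key (T.dist a v) u v h rfl

lemma iso_path (hT : T.IsTree) (hn : 3 ≤ Fintype.card V) (hdeg : ∀ v, T.degree v ≤ 2) :
    Nonempty (T ≃g SimpleGraph.pathGraph (Fintype.card V)) := by
  obtain ⟨a, ha⟩ : ∃ a : V, T.degree a = 1 := by
    have h2 := leaf_count hT (by omega)
    obtain ⟨a, haa⟩ := Finset.card_pos.1 (by omega : 0 < (univ.filter
      (fun v => T.degree v = 1)).card)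
    exact ⟨a, (Finset.mem_filter.1 haa).2⟩
  have hinj := dist_inj hT hdeg ha
  have hlt : ∀ v, T.dist a v < Fintype.card V := by
    intro v
    obtain ⟨p, hp, hl⟩ := hT.isConnected.exists_path_of_dist a v
    rw [← hl]
    exact hp.length_lt
  let f : V → Fin (Fintype.card V) := fun v => ⟨T.dist a v, hlt v⟩
  have hfinj : Function.Injective f := by
    intro u v h
    exact hinj (by simpa [f, Fin.mk.injEq] using h)
  have hbij : Function.Bijective f :=
    (Fintype.bijective_iff_injective_and_card f).2 ⟨hfinj, by simp⟩
  let e := Equiv.ofBijective f hbij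
  have he : ∀ v, (e v : ℕ) = T.dist a v := fun v => rfl
  refine ⟨⟨e, ?_⟩⟩
  intro u v
  rw [SimpleGraph.pathGraph_adj]
  simp only [he]
  constructor
  · rintro (h | h)
    · have hva : v ≠ a := by
        rintro rfl
        rw [SimpleGraph.dist_self] at h
        omega
      obtain ⟨w, hw, hwd⟩ := exists_parent hT.isConnected hva
      have : w = u := hinj (by simp only; omega)
      exact this ▸ hw
    · have hua : u ≠ a := by
        rintro rfl
        rw [SimpleGraph.dist_self] at h
        omega
      obtain ⟨w, hw, hwd⟩ := exists_parent hT.isConnected hua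
      have : w = v := hinj (by simp only; omega)
      exact T.adj_symm (this ▸ hw)
  · intro h
    have hne : T.dist a u ≠ T.dist a v := fun hh => T.ne_of_adj h (hinj hh)
    have h1 : T.dist a v ≤ T.dist a u + T.dist u v := hT.isConnected.dist_triangle
    have h2 : T.dist a u ≤ T.dist a v + T.dist v u := hT.isConnected.dist_triangle
    have huv : T.dist u v = 1 := SimpleGraph.dist_eq_one_iff_adj.2 h
    have hvu : T.dist v u = 1 := SimpleGraph.dist_eq_one_iff_adj.2 (T.adj_symm h)
    omega

lemma deg_le_two_of_iso (e : T ≃g SimpleGraph.pathGraph (Fintype.card V)) (v : V) :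
    T.degree v ≤ 2 := by
  have hinj : Set.InjOn (fun w => decide ((e v : ℕ) + 1 = (e w : ℕ)))
      (T.neighborFinset v : Set V) := by
    intro w1 hw1 w2 hw2 hf
    simp only [Finset.coe_sort_coe, mem_coe, mem_neighborFinset] at hw1 hw2
    have h1 := (SimpleGraph.pathGraph_adj).1 (e.map_rel_iff.2 hw1)
    have h2 := (SimpleGraph.pathGraph_adj).1 (e.map_rel_iff.2 hw2)
    simp only [decide_eq_decide] at hf
    have : (e w1 : ℕ) = (e w2 : ℕ) := by omega
    exact e.toEquiv.injective (Fin.ext this)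
  have hle : (T.neighborFinset v).card ≤ (univ : Finset Bool).card := by
    refine Finset.card_le_card_of_injOn _ (fun _ _ => Finset.mem_univ _) hinj
  simpa using hle

section Sums

variable (hT : T.IsTree) (hn : 3 ≤ Fintype.card V) {p : ℝ} (hp : 0 < p)
include hT hn

lemma sum_nbr_const (c : ℝ) :
    ∑ u : V, ∑ _v ∈ T.neighborFinset u, c = 2 * ((Fintype.card V : ℝ) - 1) * c := by
  have hcast : ((2 * (Fintype.card V - 1) : ℕ) : ℝ) = 2 * ((Fintype.card V : ℝ) - 1) := by
    have : 1 ≤ Fintype.card V := by omega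
    push_cast [this]
    ring
  calc ∑ u : V, ∑ _v ∈ T.neighborFinset u, c = ∑ u : V, (T.degree u : ℝ) * c := by
        refine Finset.sum_congr rfl fun u _ => ?_
        rw [Finset.sum_const, SimpleGraph.degree, nsmul_eq_mul]
    _ = ((∑ u : V, T.degree u : ℕ) : ℝ) * c := by
        rw [← Finset.sum_mul]
        push_cast
        ring
    _ = 2 * ((Fintype.card V : ℝ) - 1) * c := by rw [sum_deg hT, hcast]

lemma sum_nbr_ind :
    ∑ u : V, ∑ v ∈ T.neighborFinset u,
      ((if T.degree u = 1 then (1:ℝ) else 0) + (if T.degree v = 1 then (1:ℝ) else 0))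
      = 2 * ((univ.filter (fun v => T.degree v = 1)).card : ℝ) := by
  have key : ∑ u : V, ∑ v ∈ T.neighborFinset u, (if T.degree u = 1 then (1:ℝ) else 0)
      = ((univ.filter (fun v => T.degree v = 1)).card : ℝ) := by
    calc ∑ u : V, ∑ v ∈ T.neighborFinset u, (if T.degree u = 1 then (1:ℝ) else 0)
        = ∑ u : V, (T.degree u : ℝ) * (if T.degree u = 1 then (1:ℝ) else 0) := by
          refine Finset.sum_congr rfl fun u _ => ?_
          rw [Finset.sum_const, SimpleGraph.degree, nsmul_eq_mul]
      _ = ∑ u ∈ univ.filter (fun v => T.degree v = 1), (T.degree u : ℝ) := by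
          rw [Finset.sum_filter]
          refine Finset.sum_congr rfl fun u _ => ?_
          by_cases h : T.degree u = 1 <;> simp [h]
      _ = ∑ u ∈ univ.filter (fun v => T.degree v = 1), (1 : ℝ) := by
          refine Finset.sum_congr rfl fun u hu => ?_
          rw [(Finset.mem_filter.1 hu).2]
          norm_num
      _ = ((univ.filter (fun v => T.degree v = 1)).card : ℝ) := by
          rw [Finset.sum_const, nsmul_eq_mul, mul_one]
  have key2 : ∑ u : V, ∑ v ∈ T.neighborFinset u, (if T.degree v = 1 then (1:ℝ) else 0)
      = ((univ.filter (fun v => T.degree v = 1)).card : ℝ) := by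
    rw [nbr_sum_comm T (fun u v => if T.degree v = 1 then (1:ℝ) else 0)]
    exact key
  rw [Finset.sum_congr rfl fun u _ => Finset.sum_add_distrib, Finset.sum_add_distrib, key, key2]
  ring

end Sums

section Terms

variable (hT : T.IsTree) (hn : 3 ≤ Fintype.card V) {p : ℝ} (hp : 0 < p)
include hT hn hp

lemma term_ge_ind {u v : V} (h : T.Adj u v) :
    (if T.degree u = 1 then (1:ℝ) else 0) + (if T.degree v = 1 then (1:ℝ) else 0)
      ≤ |(T.degree u : ℝ) - T.degree v| ^ p := by
  have h1 : ∀ x : ℝ, 1 ≤ x → (1:ℝ) ≤ x ^ p := by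
    intro x hx
    calc (1:ℝ) = 1 ^ p := (Real.one_rpow p).symm
    _ ≤ x ^ p := Real.rpow_le_rpow (by norm_num) hx hp.le
  by_cases hu : T.degree u = 1
  · have hv2 : 2 ≤ T.degree v := leaf_nbr_deg hT.isConnected hn h hu
    have hv : ¬ T.degree v = 1 := by omega
    have hcu : (T.degree u : ℝ) = 1 := by exact_mod_cast hu
    have hcv : (2:ℝ) ≤ (T.degree v : ℝ) := by exact_mod_cast hv2
    have habs : 1 ≤ |(T.degree u : ℝ) - T.degree v| := by
      rw [abs_sub_comm, abs_of_nonneg (by linarith)]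
      linarith
    rw [if_pos hu, if_neg hv, add_zero]
    exact h1 _ habs
  · by_cases hv : T.degree v = 1
    · have hu2 : 2 ≤ T.degree u := leaf_nbr_deg hT.isConnected hn (T.adj_symm h) hv
      have hcv : (T.degree v : ℝ) = 1 := by exact_mod_cast hv
      have hcu : (2:ℝ) ≤ (T.degree u : ℝ) := by exact_mod_cast hu2
      have habs : 1 ≤ |(T.degree u : ℝ) - T.degree v| := by
        rw [abs_of_nonneg (by linarith)]
        linarith
      rw [if_neg hu, if_pos hv, zero_add]
      exact h1 _ habs
    · simp only [hu, hv, if_false, add_zero]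
      exact Real.rpow_nonneg (abs_nonneg _) p

lemma term_eq_ind (hdeg : ∀ v, T.degree v ≤ 2) {u v : V} (h : T.Adj u v) :
    |(T.degree u : ℝ) - T.degree v| ^ p
      = (if T.degree u = 1 then (1:ℝ) else 0) + (if T.degree v = 1 then (1:ℝ) else 0) := by
  have hu1 := degree_pos hT.isConnected (by omega) u
  have hv1 := degree_pos hT.isConnected (by omega) v
  by_cases hu : T.degree u = 1
  · have hv2 : 2 ≤ T.degree v := leaf_nbr_deg hT.isConnected hn h hu
    have hv : T.degree v = 2 := by have := hdeg v; omega
    have hcu : (T.degree u : ℝ) = 1 := by exact_mod_cast hu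
    have hcv : (T.degree v : ℝ) = 2 := by exact_mod_cast hv
    have hv' : ¬ T.degree v = 1 := by omega
    rw [hcu, hcv]
    simp only [hu, hv', if_true, if_false, add_zero]
    rw [show |(1:ℝ) - 2| = 1 by norm_num, Real.one_rpow]
  · have hu2 : T.degree u = 2 := by have := hdeg u; omega
    have hcu : (T.degree u : ℝ) = 2 := by exact_mod_cast hu2
    by_cases hv : T.degree v = 1
    · have hcv : (T.degree v : ℝ) = 1 := by exact_mod_cast hv
      rw [hcu, hcv]
      simp only [hu, hv, if_true, if_false, zero_add]
      rw [show |(2:ℝ) - 1| = 1 by norm_num, Real.one_rpow]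
    · have hv2 : T.degree v = 2 := by have := hdeg v; omega
      have hcv : (T.degree v : ℝ) = 2 := by exact_mod_cast hv2
      rw [hcu, hcv]
      simp only [hu, hv, if_false, add_zero]
      rw [show |(2:ℝ) - 2| = 0 by norm_num, Real.zero_rpow hp.ne']

lemma term_le {u v : V} (h : T.Adj u v) :
    |(T.degree u : ℝ) - T.degree v| ^ p ≤ ((Fintype.card V : ℝ) - 2) ^ p := by
  refine Real.rpow_le_rpow (abs_nonneg _) ?_ hp.le
  have hcu : (1:ℝ) ≤ (T.degree u : ℝ) := by
    exact_mod_cast degree_pos hT.isConnected (by omega) u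
  have hcv : (1:ℝ) ≤ (T.degree v : ℝ) := by
    exact_mod_cast degree_pos hT.isConnected (by omega) v
  have hcu2 : (T.degree u : ℝ) < (Fintype.card V : ℝ) := by
    exact_mod_cast T.degree_lt_card_verts u
  have hcv2 : (T.degree v : ℝ) < (Fintype.card V : ℝ) := by
    exact_mod_cast T.degree_lt_card_verts v
  have hcu2' : (T.degree u : ℝ) ≤ (Fintype.card V : ℝ) - 1 := by
    have : (T.degree u : ℕ) + 1 ≤ Fintype.card V := T.degree_lt_card_verts u
    have := (by exact_mod_cast this : (T.degree u : ℝ) + 1 ≤ (Fintype.card V : ℝ))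
    linarith
  have hcv2' : (T.degree v : ℝ) ≤ (Fintype.card V : ℝ) - 1 := by
    have : (T.degree v : ℕ) + 1 ≤ Fintype.card V := T.degree_lt_card_verts v
    have := (by exact_mod_cast this : (T.degree v : ℝ) + 1 ≤ (Fintype.card V : ℝ))
    linarith
  rw [abs_sub_le_iff]
  constructor <;> linarith

end Terms

section Slevel

variable (hT : T.IsTree) (hn : 3 ≤ Fintype.card V) {p : ℝ} (hp : 0 < p)
include hT hn

lemma leaf_count_le (hdeg : ∀ v, T.degree v ≤ 2) :
    (univ.filter (fun v => T.degree v = 1)).card ≤ 2 := by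
  classical
  set L := univ.filter (fun v => T.degree v = 1) with hL
  have hsplit : ∑ v ∈ L, T.degree v + ∑ v ∈ Lᶜ, T.degree v = 2 * (Fintype.card V - 1) := by
    rw [Finset.sum_add_sum_compl, sum_deg hT]
  have h1 : ∑ v ∈ L, T.degree v = L.card := by
    rw [Finset.sum_congr rfl (fun v hv => (Finset.mem_filter.1 hv).2), Finset.sum_const,
      smul_eq_mul, mul_one]
  have h2 : ∑ v ∈ Lᶜ, T.degree v ≤ 2 * Lᶜ.card := by
    rw [show 2 * Lᶜ.card = ∑ _v ∈ Lᶜ, 2 by rw [Finset.sum_const, smul_eq_mul, mul_comm]]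
    exact Finset.sum_le_sum fun v _ => hdeg v
  have hLc : Lᶜ.card = Fintype.card V - L.card := by rw [Finset.card_compl]
  have hle : L.card ≤ Fintype.card V := by
    simpa using Finset.card_le_card (Finset.subset_univ L)
  omega

include hp

lemma S_ge : 2 * ((univ.filter (fun v => T.degree v = 1)).card : ℝ)
    ≤ ∑ u : V, ∑ v ∈ T.neighborFinset u, |(T.degree u : ℝ) - T.degree v| ^ p := by
  rw [← sum_nbr_ind hT hn]
  refine Finset.sum_le_sum fun u _ => Finset.sum_le_sum fun v hv => ?_
  exact term_ge_ind hT hn hp ((T.mem_neighborFinset u v).1 hv)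

lemma S_eq_four (hdeg : ∀ v, T.degree v ≤ 2) :
    ∑ u : V, ∑ v ∈ T.neighborFinset u, |(T.degree u : ℝ) - T.degree v| ^ p = 4 := by
  have hL : (univ.filter (fun v => T.degree v = 1)).card = 2 :=
    le_antisymm (leaf_count_le hT hn hdeg) (leaf_count hT (by omega))
  calc ∑ u : V, ∑ v ∈ T.neighborFinset u, |(T.degree u : ℝ) - T.degree v| ^ p
      = ∑ u : V, ∑ v ∈ T.neighborFinset u,
        ((if T.degree u = 1 then (1:ℝ) else 0) + (if T.degree v = 1 then (1:ℝ) else 0)) := by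
        refine Finset.sum_congr rfl fun u _ => Finset.sum_congr rfl fun v hv => ?_
        exact term_eq_ind hT hn hp hdeg ((T.mem_neighborFinset u v).1 hv)
    _ = 2 * ((univ.filter (fun v => T.degree v = 1)).card : ℝ) := sum_nbr_ind hT hn
    _ = 4 := by rw [hL]; norm_num

lemma S_le : ∑ u : V, ∑ v ∈ T.neighborFinset u, |(T.degree u : ℝ) - T.degree v| ^ p
    ≤ 2 * ((Fintype.card V : ℝ) - 1) * ((Fintype.card V : ℝ) - 2) ^ p := by
  rw [← sum_nbr_const hT hn (((Fintype.card V : ℝ) - 2) ^ p)]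
  refine Finset.sum_le_sum fun u _ => Finset.sum_le_sum fun v hv => ?_
  exact term_le hT hn hp ((T.mem_neighborFinset u v).1 hv)

lemma star_degrees {c : V} (hstar : ∀ w : V, w ≠ c → T.Adj c w) :
    T.degree c = Fintype.card V - 1 ∧ ∀ w : V, w ≠ c → T.degree w = 1 := by
  have hNc : T.neighborFinset c = univ.erase c := by
    apply Finset.Subset.antisymm
    · intro x hx
      rw [mem_neighborFinset] at hx
      exact Finset.mem_erase.2 ⟨(T.ne_of_adj hx).symm, Finset.mem_univ x⟩
    · intro x hx
      rw [mem_neighborFinset]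
      exact hstar x (Finset.mem_erase.1 hx).1
  have hdc : T.degree c = Fintype.card V - 1 := by
    rw [SimpleGraph.degree, hNc, Finset.card_erase_of_mem (Finset.mem_univ c), Finset.card_univ]
  refine ⟨hdc, ?_⟩
  by_contra hcon
  push_neg at hcon
  obtain ⟨w, hwc, hw1⟩ := hcon
  have hw2 : 2 ≤ T.degree w := by
    have := degree_pos hT.isConnected (by omega) w
    omega
  have hsum : ∑ v ∈ univ.erase c, T.degree v = Fintype.card V - 1 := by
    have h := sum_deg hT
    rw [← Finset.add_sum_erase _ _ (Finset.mem_univ c), hdc] at h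
    omega
  have hgt : ∑ v ∈ univ.erase c, 1 < ∑ v ∈ univ.erase c, T.degree v := by
    refine Finset.sum_lt_sum (fun v hv => degree_pos hT.isConnected (by omega) v)
      ⟨w, Finset.mem_erase.2 ⟨hwc, Finset.mem_univ w⟩, by omega⟩
  rw [Finset.sum_const, smul_eq_mul, mul_one, Finset.card_erase_of_mem (Finset.mem_univ c),
    Finset.card_univ] at hgt
  omega

lemma S_eq_star {c : V} (hstar : ∀ w : V, w ≠ c → T.Adj c w) :
    ∑ u : V, ∑ v ∈ T.neighborFinset u, |(T.degree u : ℝ) - T.degree v| ^ p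
      = 2 * ((Fintype.card V : ℝ) - 1) * ((Fintype.card V : ℝ) - 2) ^ p := by
  obtain ⟨hdc, hdw⟩ := star_degrees hT hn hp hstar
  have hterm : ∀ u v : V, T.Adj u v →
      |(T.degree u : ℝ) - T.degree v| ^ p = ((Fintype.card V : ℝ) - 2) ^ p := by
    intro u v huv
    have habs : |(T.degree u : ℝ) - T.degree v| = (Fintype.card V : ℝ) - 2 := by
      have hcn : ((Fintype.card V - 1 : ℕ) : ℝ) = (Fintype.card V : ℝ) - 1 := by
        have : 1 ≤ Fintype.card V := by omega
        push_cast [this]; ring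
      rcases eq_or_ne u c with rfl | hu
      · have hv : v ≠ u := (T.ne_of_adj huv).symm
        rw [hdc, hdw v hv, hcn]
        have h3 : (3:ℝ) ≤ (Fintype.card V : ℝ) := by exact_mod_cast hn
        rw [abs_of_nonneg (by push_cast; linarith)]
        push_cast
        ring
      · rcases eq_or_ne v c with rfl | hv
        · rw [hdc, hdw u hu, hcn]
          have h3 : (3:ℝ) ≤ (Fintype.card V : ℝ) := by exact_mod_cast hn
          rw [abs_of_nonpos (by push_cast; linarith)]
          push_cast
          ring
        · exact absurd (nbr_unique (hdw u hu) huv (T.adj_symm (hstar u hu))) hv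
    rw [habs]
  rw [← sum_nbr_const hT hn (((Fintype.card V : ℝ) - 2) ^ p)]
  refine Finset.sum_congr rfl fun u _ => Finset.sum_congr rfl fun v hv => ?_
  exact hterm u v ((T.mem_neighborFinset u v).1 hv)

end Slevel

lemma rpow_right_inj {x y q : ℝ} (hx : 0 ≤ x) (hy : 0 ≤ y) (hq : 0 < q) (h : x ^ q = y ^ q) :
    x = y := by
  rcases lt_trichotomy x y with hlt | heq | hlt
  · exact absurd h (ne_of_lt (Real.rpow_lt_rpow hx hlt hq))
  · exact heq
  · exact absurd h.symm (ne_of_lt (Real.rpow_lt_rpow hy hlt hq))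

section Eq

variable (hT : T.IsTree) (hn : 3 ≤ Fintype.card V) {p : ℝ} (hp : 0 < p)
include hT hn hp

lemma deg_le_two_of_S_eq_four
    (h : ∑ u : V, ∑ v ∈ T.neighborFinset u, |(T.degree u : ℝ) - T.degree v| ^ p = 4) :
    ∀ v, T.degree v ≤ 2 := by
  intro v0
  by_contra h3
  have hL3 := leaf_count3 hT hn v0 (by omega)
  have hge := S_ge hT hn hp
  have : (3:ℝ) ≤ ((univ.filter (fun v => T.degree v = 1)).card : ℝ) := by exact_mod_cast hL3
  rw [h] at hge
  linarith

lemma star_of_S_eq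
    (h : ∑ u : V, ∑ v ∈ T.neighborFinset u, |(T.degree u : ℝ) - T.degree v| ^ p
      = 2 * ((Fintype.card V : ℝ) - 1) * ((Fintype.card V : ℝ) - 2) ^ p) :
    ∃ c : V, ∀ w : V, w ≠ c → T.Adj c w := by
  have h3 : (3:ℝ) ≤ (Fintype.card V : ℝ) := by exact_mod_cast hn
  -- every adjacent pair attains the maximum
  have hterms : ∀ u v : V, T.Adj u v →
      |(T.degree u : ℝ) - T.degree v| ^ p = ((Fintype.card V : ℝ) - 2) ^ p := by
    have hzero : ∑ u : V, ∑ v ∈ T.neighborFinset u,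
        (((Fintype.card V : ℝ) - 2) ^ p - |(T.degree u : ℝ) - T.degree v| ^ p) = 0 := by
      rw [Finset.sum_congr rfl fun u _ => Finset.sum_sub_distrib _ _, Finset.sum_sub_distrib,
        sum_nbr_const hT hn, h, sub_self]
    have hnn : ∀ u : V, ∀ v ∈ T.neighborFinset u,
        (0:ℝ) ≤ ((Fintype.card V : ℝ) - 2) ^ p - |(T.degree u : ℝ) - T.degree v| ^ p := by
      intro u v hv
      have := term_le hT hn hp ((T.mem_neighborFinset u v).1 hv)
      linarith
    have houter := (Finset.sum_eq_zero_iff_of_nonneg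
      (fun u _ => Finset.sum_nonneg (hnn u))).1 hzero
    intro u v huv
    have hin := (Finset.sum_eq_zero_iff_of_nonneg (hnn u)).1 (houter u (Finset.mem_univ u))
      v ((T.mem_neighborFinset u v).2 huv)
    linarith
  -- find an edge
  obtain ⟨u, v, huv⟩ : ∃ u v : V, T.Adj u v := by
    have hne : Nonempty V := Fintype.card_pos_iff.1 (by omega)
    obtain ⟨u⟩ := hne
    have h1 := degree_pos hT.isConnected (by omega) u
    obtain ⟨v, hv⟩ := Finset.card_pos.1 (by exact h1 : 0 < (T.neighborFinset u).card)
    exact ⟨u, v, (T.mem_neighborFinset u v).1 hv⟩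
  -- one endpoint has degree n - 1
  have habs : |(T.degree u : ℝ) - T.degree v| = (Fintype.card V : ℝ) - 2 :=
    rpow_right_inj (abs_nonneg _) (by linarith) hp (hterms u v huv)
  have hcu : (1:ℝ) ≤ (T.degree u : ℝ) := by
    exact_mod_cast degree_pos hT.isConnected (by omega) u
  have hcv : (1:ℝ) ≤ (T.degree v : ℝ) := by
    exact_mod_cast degree_pos hT.isConnected (by omega) v
  have hcu2 : (T.degree u : ℝ) + 1 ≤ (Fintype.card V : ℝ) := by
    exact_mod_cast T.degree_lt_card_verts u
  have hcv2 : (T.degree v : ℝ) + 1 ≤ (Fintype.card V : ℝ) := by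
    exact_mod_cast T.degree_lt_card_verts v
  obtain ⟨c, hc⟩ : ∃ c : V, (T.degree c : ℝ) = (Fintype.card V : ℝ) - 1 := by
    rcases (abs_eq (by linarith : (0:ℝ) ≤ (Fintype.card V : ℝ) - 2)).1 habs with heq | heq
    · exact ⟨u, by linarith⟩
    · exact ⟨v, by linarith⟩
  have hdc : T.degree c = Fintype.card V - 1 := by
    have : (T.degree c : ℝ) = ((Fintype.card V - 1 : ℕ) : ℝ) := by
      have h1 : 1 ≤ Fintype.card V := by omega
      push_cast [h1]
      linarith
    exact_mod_cast this
  refine ⟨c, ?_⟩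
  have hNc : T.neighborFinset c = univ.erase c := by
    apply Finset.eq_of_subset_of_card_le
    · intro x hx
      rw [mem_neighborFinset] at hx
      exact Finset.mem_erase.2 ⟨(T.ne_of_adj hx).symm, Finset.mem_univ x⟩
    · rw [Finset.card_erase_of_mem (Finset.mem_univ c), Finset.card_univ]
      rw [show (T.neighborFinset c).card = T.degree c from rfl, hdc]
  intro w hw
  have : w ∈ T.neighborFinset c := by
    rw [hNc]
    exact Finset.mem_erase.2 ⟨hw, Finset.mem_univ w⟩
  exact (T.mem_neighborFinset c w).1 this

end Eq

end Aux

theorem stmt14 {V : Type*} [Fintype V] [DecidableEq V]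
    (T : SimpleGraph V) [DecidableRel T.Adj] (hT : T.IsTree)
    (hn : 3 ≤ Fintype.card V) (p : ℝ) (hp : 0 < p) :
    ((2 : ℝ) ^ (1 / p) ≤ Ap T p ∧ Ap T p ≤ ((Fintype.card V : ℝ) - 2) * ((Fintype.card V : ℝ) - 1) ^ (1 / p)) ∧
    (Ap T p = (2 : ℝ) ^ (1 / p) ↔ Nonempty (T ≃g SimpleGraph.pathGraph (Fintype.card V))) ∧
    (Ap T p = ((Fintype.card V : ℝ) - 2) * ((Fintype.card V : ℝ) - 1) ^ (1 / p) ↔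
      -- T is the star K_{1, n-1}
      ∃ c : V, ∀ w : V, w ≠ c → T.Adj c w) := by
  have h3 : (3:ℝ) ≤ (Fintype.card V : ℝ) := by exact_mod_cast hn
  set S := ∑ u : V, ∑ v ∈ T.neighborFinset u, |(T.degree u : ℝ) - (T.degree v : ℝ)| ^ p with hS
  have hAp : Ap T p = (S / 2) ^ (1 / p) := rfl
  have h4 : (4:ℝ) ≤ S := by
    have hge := S_ge hT hn hp
    have hL2 : (2:ℝ) ≤ ((univ.filter (fun v => T.degree v = 1)).card : ℝ) := by
      exact_mod_cast leaf_count hT (by omega)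
    rw [← hS] at hge
    linarith
  have hle : S ≤ 2 * ((Fintype.card V : ℝ) - 1) * ((Fintype.card V : ℝ) - 2) ^ p := by
    have := S_le hT hn hp
    rwa [← hS] at this
  have hRHS : ((Fintype.card V : ℝ) - 2) * ((Fintype.card V : ℝ) - 1) ^ (1 / p)
      = (((Fintype.card V : ℝ) - 1) * ((Fintype.card V : ℝ) - 2) ^ p) ^ (1 / p) := by
    rw [Real.mul_rpow (by linarith) (Real.rpow_nonneg (by linarith) p),
      ← Real.rpow_mul (by linarith : (0:ℝ) ≤ (Fintype.card V : ℝ) - 2),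
      mul_one_div_cancel hp.ne', Real.rpow_one, mul_comm]
  have hp' : 0 < 1 / p := by positivity
  have hSd2 : (0:ℝ) ≤ S / 2 := by linarith
  refine ⟨⟨?_, ?_⟩, ?_, ?_⟩
  · rw [hAp]
    exact Real.rpow_le_rpow (by norm_num) (by linarith) hp'.le
  · rw [hAp, hRHS]
    exact Real.rpow_le_rpow hSd2 (by linarith) hp'.le
  · constructor
    · intro h
      rw [hAp] at h
      have hS4 : S = 4 := by
        have := rpow_right_inj hSd2 (by norm_num) hp' h
        linarith
      have hdeg := deg_le_two_of_S_eq_four hT hn hp (hS ▸ hS4)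
      exact iso_path hT hn hdeg
    · rintro ⟨e⟩
      have hdeg : ∀ v, T.degree v ≤ 2 := deg_le_two_of_iso e
      have hS4 : S = 4 := hS.trans (S_eq_four hT hn hp hdeg)
      rw [hAp, hS4]
      norm_num
  · constructor
    · intro h
      rw [hAp, hRHS] at h
      have hSeq : S = 2 * ((Fintype.card V : ℝ) - 1) * ((Fintype.card V : ℝ) - 2) ^ p := by
        have hnn : (0:ℝ) ≤ ((Fintype.card V : ℝ) - 1) * ((Fintype.card V : ℝ) - 2) ^ p :=
          mul_nonneg (by linarith) (Real.rpow_nonneg (by linarith) p)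
        have := rpow_right_inj hSd2 hnn hp' h
        linarith
      exact star_of_S_eq hT hn hp (hS ▸ hSeq)
    · rintro ⟨c, hc⟩
      have hSeq := S_eq_star hT hn hp hc
      rw [hAp, hS, hSeq, hRHS]
      ring_nf
  done
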